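/- arXiv:2604.25320 — 2 statements merged into one kernel-verified Lean document; each statement's English description precedes it below -/
import Mathlib

section
/- Let (f_n)_{n≥1} be a sequence of nonconstant holomorphic self-maps of the unit disk 𝔻 whose forward iterates F_n := f_n ∘ ⋯ ∘ f_1 converge locally uniformly on 𝔻 to a holomorphic self-map F of 𝔻. If Σ_{n≥1} (1 − D_h f_n(a)) < ∞ for some a ∈ 𝔻, then Σ_{n≥1} (1 − D_h f_n(b)) < ∞ for every b ∈ 𝔻. -/
open Filter Metric Set

noncomputable section

/-- The open unit disk in the complex plane. -/
def unitDisk : Set ℂ := Metric.ball (0 : ℂ) 1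

/-- A holomorphic self-map of the unit disk. -/
def IsHolSelfMap (f : ℂ → ℂ) : Prop :=
  DifferentiableOn ℂ f unitDisk ∧ Set.MapsTo f unitDisk unitDisk

/-- The hyperbolic distortion `D_h f (z) = (1 - |z|²)|f′(z)| / (1 - |f(z)|²)`. -/
def hypDist (f : ℂ → ℂ) (z : ℂ) : ℝ :=
  (1 - ‖z‖ ^ 2) * ‖deriv f z‖ / (1 - ‖f z‖ ^ 2)

def Complex.abs : AbsoluteValue ℂ ℝ := IsAbsoluteValue.toAbsoluteValue (norm : ℂ → ℝ)
@[simp] lemma Complex.abs_eq_norm' (z : ℂ) : Complex.abs z = ‖z‖ := rfl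
lemma Complex.norm_eq_abs (z : ℂ) : ‖z‖ = Complex.abs z := rfl
lemma Complex.abs_conj (z : ℂ) : Complex.abs ((starRingEnd ℂ) z) = Complex.abs z := by simp
lemma Complex.abs_apply (z : ℂ) : Complex.abs z = Real.sqrt (Complex.normSq z) := by
  simp [Complex.norm_def]
lemma Complex.abs_ofReal (r : ℝ) : Complex.abs (r : ℂ) = |r| := by simp
lemma Complex.sq_abs (z : ℂ) : Complex.abs z ^ 2 = Complex.normSq z := by simp [Complex.sq_norm]

section Stmt1AuxSection
open Complex

namespace Stmt1Aux

/-- Möbius factor `(z - c) / (1 - c̄ z)`. -/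
def T (c z : ℂ) : ℂ := (z - c) / (1 - (starRingEnd ℂ) c * z)

lemma normSq_identity (c z : ℂ) :
    normSq (1 - (starRingEnd ℂ) c * z) - normSq (z - c) = (1 - normSq c) * (1 - normSq z) := by
  simp [normSq_apply, mul_re, mul_im, conj_re, conj_im, sub_re, sub_im, one_re, one_im]
  ring

lemma denom_ne {c z : ℂ} (hc : Complex.abs c < 1) (hz : Complex.abs z ≤ 1) :
    1 - (starRingEnd ℂ) c * z ≠ 0 := by
  intro h
  have h1 : (starRingEnd ℂ) c * z = 1 := by
    have := sub_eq_zero.mp h; exact this.symm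
  have : Complex.abs ((starRingEnd ℂ) c * z) = 1 := by rw [h1]; simp
  rw [map_mul, Complex.abs_conj] at this
  nlinarith [Complex.abs.nonneg z, Complex.abs.nonneg c]

lemma abs_T_lt_one {c z : ℂ} (hc : Complex.abs c < 1) (hz : Complex.abs z < 1) :
    Complex.abs (T c z) < 1 := by
  have hd := denom_ne hc hz.le
  have hdpos : 0 < Complex.abs (1 - (starRingEnd ℂ) c * z) := by
    simpa [Complex.abs.pos_iff] using hd
  rw [T, map_div₀, div_lt_one hdpos]
  have h1 : normSq (z - c) < normSq (1 - (starRingEnd ℂ) c * z) := by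
    have := normSq_identity c z
    have hc2 : normSq c < 1 := by rw [← Complex.sq_abs]; nlinarith [Complex.abs.nonneg c]
    have hz2 : normSq z < 1 := by rw [← Complex.sq_abs]; nlinarith [Complex.abs.nonneg z]
    nlinarith
  rw [Complex.abs_apply, Complex.abs_apply]
  exact Real.sqrt_lt_sqrt (normSq_nonneg _) h1

lemma T_self (c : ℂ) : T c c = 0 := by simp [T]

lemma T_zero_right (w : ℂ) : T (-w) 0 = w := by simp [T]

lemma T_inv {w z : ℂ} (hw : Complex.abs w < 1) (hz : Complex.abs z < 1) :
    T (-w) (T w z) = z := by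
  have d1 : 1 - (starRingEnd ℂ) w * z ≠ 0 := denom_ne hw hz.le
  have d2 : 1 - (starRingEnd ℂ) w * w ≠ 0 := denom_ne hw hw.le
  have d2' : 1 - w * (starRingEnd ℂ) w ≠ 0 := by rwa [mul_comm] at d2
  rw [T, T, map_neg]
  have e1 : (z - w) / (1 - (starRingEnd ℂ) w * z) - -w
      = z * (1 - (starRingEnd ℂ) w * w) / (1 - (starRingEnd ℂ) w * z) := by
    rw [eq_div_iff d1, sub_mul, div_mul_cancel₀ _ d1]; ring
  have e2 : 1 - -(starRingEnd ℂ) w * ((z - w) / (1 - (starRingEnd ℂ) w * z))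
      = (1 - (starRingEnd ℂ) w * w) / (1 - (starRingEnd ℂ) w * z) := by
    rw [eq_div_iff d1, sub_mul, mul_assoc, div_mul_cancel₀ _ d1]; ring
  rw [e1, e2, div_div_div_cancel_right₀ d1, mul_div_assoc, div_self d2, mul_one]

lemma T_mul_out {c d : ℂ} (h : 1 - (starRingEnd ℂ) c * d ≠ 0) :
    Complex.abs (T c d) * Complex.abs (1 - (starRingEnd ℂ) c * d) = Complex.abs (d - c) := by
  rw [T, map_div₀, div_mul_cancel₀]
  exact Complex.abs.ne_zero h

lemma hasDerivAt_T {c z : ℂ} (hne : 1 - (starRingEnd ℂ) c * z ≠ 0) :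
    HasDerivAt (T c) ((1 - (starRingEnd ℂ) c * c) / (1 - (starRingEnd ℂ) c * z) ^ 2) z := by
  have h1 : HasDerivAt (fun z : ℂ => z - c) 1 z := (hasDerivAt_id z).sub_const c
  have h2 : HasDerivAt (fun z : ℂ => 1 - (starRingEnd ℂ) c * z) (-(starRingEnd ℂ) c) z := by
    simpa using ((hasDerivAt_id z).const_mul ((starRingEnd ℂ) c)).const_sub 1
  have := h1.div h2 hne
  have e : (1 - (starRingEnd ℂ) c * c) / (1 - (starRingEnd ℂ) c * z) ^ 2 =
      (1 * (1 - (starRingEnd ℂ) c * z) - (z - c) * -(starRingEnd ℂ) c)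
        / (1 - (starRingEnd ℂ) c * z) ^ 2 := by
    congr 1; ring
  rw [e]; exact this

lemma T_differentiableOn {c : ℂ} (hc : Complex.abs c < 1) :
    DifferentiableOn ℂ (T c) (ball 0 1) := by
  intro z hz
  have hz' : Complex.abs z < 1 := by simpa [mem_ball_zero_iff] using hz
  exact (hasDerivAt_T (denom_ne hc hz'.le)).differentiableAt.differentiableWithinAt

lemma T_mapsTo {c : ℂ} (hc : Complex.abs c < 1) :
    MapsTo (T c) (ball 0 1) (ball 0 1) := by
  intro z hz
  have hz' : Complex.abs z < 1 := by simpa [mem_ball_zero_iff] using hz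
  simpa [mem_ball_zero_iff] using abs_T_lt_one hc hz'

lemma T_abs_symm (a b : ℂ) : Complex.abs (T a b) = Complex.abs (T b a) := by
  rw [T, T, map_div₀, map_div₀]
  congr 1
  · exact AbsoluteValue.map_sub _ _ _
  · rw [show (1 - (starRingEnd ℂ) b * a) = (starRingEnd ℂ) (1 - (starRingEnd ℂ) a * b) by
      simp [map_sub, map_mul, mul_comm], Complex.abs_conj]

lemma sp2 (g : ℂ → ℂ) (hd : DifferentiableOn ℂ g (ball 0 1))
    (hm : MapsTo g (ball 0 1) (ball 0 1)) {z w : ℂ}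
    (hz : Complex.abs z < 1) (hw : Complex.abs w < 1) :
    Complex.abs (g z - g w)
      ≤ Complex.abs (T w z) * Complex.abs (1 - (starRingEnd ℂ) (g w) * g z) := by
  have hwm : w ∈ ball (0:ℂ) 1 := by simpa [mem_ball_zero_iff] using hw
  have hzm : z ∈ ball (0:ℂ) 1 := by simpa [mem_ball_zero_iff] using hz
  have hgw : Complex.abs (g w) < 1 := by simpa [mem_ball_zero_iff] using hm hwm
  have hgz : Complex.abs (g z) < 1 := by simpa [mem_ball_zero_iff] using hm hzm
  have hnw : Complex.abs (-w) < 1 := by simpa using hw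
  set h : ℂ → ℂ := fun u => T (g w) (g (T (-w) u)) with hh
  have hd' : DifferentiableOn ℂ h (ball 0 1) := by
    exact DifferentiableOn.comp (T_differentiableOn hgw)
      (DifferentiableOn.comp hd (T_differentiableOn hnw) (T_mapsTo hnw))
      ((hm.comp (T_mapsTo hnw)))
  have hm' : MapsTo h (ball 0 1) (ball 0 1) := fun u hu =>
    (T_mapsTo hgw) (hm ((T_mapsTo hnw) hu))
  have h0 : h 0 = 0 := by rw [hh]; simp only; rw [T_zero_right, T_self]
  have hm'' : MapsTo h (ball 0 1) (ball (h 0) 1) := by rwa [h0]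
  have hTz : T w z ∈ ball (0:ℂ) 1 := (T_mapsTo hw) hzm
  have key := Complex.dist_le_div_mul_dist_of_mapsTo_ball hd' (hm''.mono_right ball_subset_closedBall) hTz
  rw [h0] at key
  have key2 : Complex.abs (h (T w z)) ≤ Complex.abs (T w z) := by
    simpa [Complex.dist_eq] using key
  have hinv : h (T w z) = T (g w) (g z) := by rw [hh]; simp only; rw [T_inv hw hz]
  rw [hinv] at key2
  have hden : 1 - (starRingEnd ℂ) (g w) * g z ≠ 0 := denom_ne hgw hgz.le
  calc Complex.abs (g z - g w)
      = Complex.abs (T (g w) (g z)) * Complex.abs (1 - (starRingEnd ℂ) (g w) * g z) :=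
        (T_mul_out hden).symm
    _ ≤ Complex.abs (T w z) * Complex.abs (1 - (starRingEnd ℂ) (g w) * g z) :=
        mul_le_mul_of_nonneg_right key2 (Complex.abs.nonneg _)

lemma spmult (g : ℂ → ℂ) (hd : DifferentiableOn ℂ g (ball 0 1))
    (hb : ∀ u ∈ ball (0:ℂ) 1, Complex.abs (g u) ≤ 1) {z w : ℂ}
    (hz : Complex.abs z < 1) (hw : Complex.abs w < 1) :
    Complex.abs (g z - g w)
      ≤ Complex.abs (T w z) * Complex.abs (1 - (starRingEnd ℂ) (g w) * g z) := by
  have hwm : w ∈ ball (0:ℂ) 1 := by simpa [mem_ball_zero_iff] using hw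
  have hzm : z ∈ ball (0:ℂ) 1 := by simpa [mem_ball_zero_iff] using hz
  have hgw := hb w hwm
  have hgz := hb z hzm
  have ht1 : Complex.abs (T w z) < 1 := abs_T_lt_one hw hz
  have ht0 : 0 ≤ Complex.abs (T w z) := Complex.abs.nonneg _
  have hA2 : Complex.abs (g z - g w) ≤ 2 := by
    calc Complex.abs (g z - g w) ≤ Complex.abs (g z) + Complex.abs (g w) := by
          simpa using norm_sub_le (g z) (g w)
      _ ≤ 2 := by linarith
  have main : ∀ ε : ℝ, 0 < ε → ε < 1 →
      Complex.abs (g z - g w)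
        ≤ Complex.abs (T w z) * Complex.abs (1 - (starRingEnd ℂ) (g w) * g z) + 4 * ε := by
    intro ε hε hε1
    set c : ℂ := ((1 - ε : ℝ) : ℂ) with hc
    have hcabs : Complex.abs c = 1 - ε := by
      rw [hc, Complex.abs_ofReal, abs_of_pos (by linarith)]
    have hconj : (starRingEnd ℂ) c = c := by rw [hc, Complex.conj_ofReal]
    have hdε : DifferentiableOn ℂ (fun u => c * g u) (ball 0 1) := hd.const_mul c
    have hmε : MapsTo (fun u => c * g u) (ball 0 1) (ball 0 1) := by
      intro u hu
      have := hb u hu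
      simp only [mem_ball_zero_iff, Complex.norm_eq_abs, map_mul, hcabs]
      nlinarith [Complex.abs.nonneg (g u)]
    have key := sp2 (fun u => c * g u) hdε hmε hz hw
    have lhs_eq : Complex.abs (c * g z - c * g w) = (1 - ε) * Complex.abs (g z - g w) := by
      rw [← mul_sub, map_mul, hcabs]
    have rhs_split : 1 - (starRingEnd ℂ) (c * g w) * (c * g z)
        = (1 - (starRingEnd ℂ) (g w) * g z)
          + (1 - c ^ 2) * ((starRingEnd ℂ) (g w) * g z) := by
      rw [map_mul, hconj]; ring
    have hq : Complex.abs ((starRingEnd ℂ) (g w) * g z) ≤ 1 := by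
      rw [map_mul, Complex.abs_conj]
      nlinarith [Complex.abs.nonneg (g w), Complex.abs.nonneg (g z)]
    have habs_c2 : Complex.abs (1 - c ^ 2) ≤ 2 * ε := by
      have : (1 : ℂ) - c ^ 2 = ((1 - (1 - ε) ^ 2 : ℝ) : ℂ) := by rw [hc]; push_cast; ring
      rw [this, Complex.abs_ofReal, _root_.abs_of_nonneg (by nlinarith)]
      nlinarith
    have rhs_le : Complex.abs (1 - (starRingEnd ℂ) (c * g w) * (c * g z))
        ≤ Complex.abs (1 - (starRingEnd ℂ) (g w) * g z) + 2 * ε := by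
      rw [rhs_split]
      calc Complex.abs _ ≤ Complex.abs (1 - (starRingEnd ℂ) (g w) * g z)
            + Complex.abs ((1 - c ^ 2) * ((starRingEnd ℂ) (g w) * g z)) :=
            Complex.abs.add_le _ _
        _ ≤ _ := by
            rw [map_mul]
            nlinarith [Complex.abs.nonneg (1 - c ^ 2),
              Complex.abs.nonneg ((starRingEnd ℂ) (g w) * g z)]
    rw [lhs_eq] at key
    have key3 : (1 - ε) * Complex.abs (g z - g w)
        ≤ Complex.abs (T w z) * (Complex.abs (1 - (starRingEnd ℂ) (g w) * g z) + 2 * ε) :=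
      key.trans (mul_le_mul_of_nonneg_left rhs_le ht0)
    nlinarith [Complex.abs.nonneg (g z - g w)]
  refine le_of_forall_pos_le_add fun δ hδ => ?_
  have h1 : (0:ℝ) < min (δ / 4) (1 / 2) := lt_min (by linarith) (by norm_num)
  have h2 : min (δ / 4) (1 / 2) < 1 := lt_of_le_of_lt (min_le_right _ _) (by norm_num)
  have := main _ h1 h2
  have h3 : 4 * min (δ / 4) (1 / 2) ≤ δ := by
    have := min_le_left (δ / 4) (1 / 2); linarith
  linarith

lemma real_pick {m n s t : ℝ} (hm0 : 0 ≤ m) (hn0 : 0 ≤ n) (hm1 : m ≤ 1) (hn1 : n ≤ 1)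
    (hsle : s ≤ m * n) (ht : 0 ≤ t)
    (h2 : m ^ 2 + n ^ 2 - 2 * s ≤ t ^ 2 * (1 + (m * n) ^ 2 - 2 * s)) :
    |m - n| ≤ t * (1 - m * n) := by
  have hkey : (m - n) ^ 2 * (1 + (m * n) ^ 2 - 2 * s)
      ≤ (m ^ 2 + n ^ 2 - 2 * s) * (1 - m * n) ^ 2 := by
    have hident : (m ^ 2 + n ^ 2 - 2 * s) * (1 - m * n) ^ 2
        - (m - n) ^ 2 * (1 + (m * n) ^ 2 - 2 * s)
        = 2 * (m * n - s) * ((1 - m ^ 2) * (1 - n ^ 2)) := by ring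
    nlinarith [mul_nonneg (mul_nonneg (by linarith : (0:ℝ) ≤ 2 * (m * n - s))
      (by nlinarith : (0:ℝ) ≤ 1 - m ^ 2)) (by nlinarith : (0:ℝ) ≤ 1 - n ^ 2)]
  have hgoal_sq : (m - n) ^ 2 ≤ (t * (1 - m * n)) ^ 2 := by
    have hPe : (1 - m * n) ^ 2 = 1 + (m * n) ^ 2 - 2 * (m * n) := by ring
    have hP : (1 - m * n) ^ 2 ≤ 1 + (m * n) ^ 2 - 2 * s := by linarith
    have hP0' : (0:ℝ) ≤ 1 + (m * n) ^ 2 - 2 * s := le_trans (sq_nonneg _) hP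
    rcases eq_or_lt_of_le hP0' with hP0 | hP0
    · have h0 : (1 - m * n) ^ 2 = 0 := le_antisymm (by linarith) (sq_nonneg _)
      have hmn : m * n = 1 := by
        have := sq_eq_zero_iff.mp h0
        linarith
      have hm1' : m = 1 := by nlinarith
      have hn1' : n = 1 := by nlinarith
      rw [hm1', hn1']; norm_num
    · have step1 : (m - n) ^ 2 * (1 + (m * n) ^ 2 - 2 * s)
          ≤ t ^ 2 * (1 + (m * n) ^ 2 - 2 * s) * (1 - m * n) ^ 2 := by
        calc (m - n) ^ 2 * (1 + (m * n) ^ 2 - 2 * s)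
            ≤ (m ^ 2 + n ^ 2 - 2 * s) * (1 - m * n) ^ 2 := hkey
          _ ≤ t ^ 2 * (1 + (m * n) ^ 2 - 2 * s) * (1 - m * n) ^ 2 :=
              mul_le_mul_of_nonneg_right h2 (sq_nonneg _)
      have step2 : (m - n) ^ 2 * (1 + (m * n) ^ 2 - 2 * s)
          ≤ (t * (1 - m * n)) ^ 2 * (1 + (m * n) ^ 2 - 2 * s) :=
        step1.trans_eq (by ring)
      exact le_of_mul_le_mul_right step2 hP0
  have h1mn : 0 ≤ 1 - m * n := by nlinarith
  rw [← Real.sqrt_sq_eq_abs, ← Real.sqrt_sq (by positivity : 0 ≤ t * (1 - m * n))]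
  exact Real.sqrt_le_sqrt hgoal_sq

lemma abs_pick {u v : ℂ} {t : ℝ} (hu : Complex.abs u ≤ 1) (hv : Complex.abs v ≤ 1)
    (ht : 0 ≤ t) (h : Complex.abs (u - v) ≤ t * Complex.abs (1 - (starRingEnd ℂ) u * v)) :
    |Complex.abs u - Complex.abs v| ≤ t * (1 - Complex.abs u * Complex.abs v) := by
  have hre : (u * (starRingEnd ℂ) v).re = ((starRingEnd ℂ) u * v).re := by
    have huv : (starRingEnd ℂ) u * v = (starRingEnd ℂ) (u * (starRingEnd ℂ) v) := by
      rw [map_mul, Complex.conj_conj]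
    rw [huv, Complex.conj_re]
  have hsle : ((starRingEnd ℂ) u * v).re ≤ Complex.abs u * Complex.abs v := by
    calc ((starRingEnd ℂ) u * v).re ≤ Complex.abs ((starRingEnd ℂ) u * v) :=
          Complex.re_le_norm _
      _ = Complex.abs u * Complex.abs v := by rw [map_mul, Complex.abs_conj]
  have sq1 : Complex.abs (u - v) ^ 2
      = Complex.abs u ^ 2 + Complex.abs v ^ 2 - 2 * ((starRingEnd ℂ) u * v).re := by
    rw [Complex.sq_abs, Complex.normSq_sub, Complex.sq_abs, Complex.sq_abs, hre]
  have sq2 : Complex.abs (1 - (starRingEnd ℂ) u * v) ^ 2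
      = 1 + (Complex.abs u * Complex.abs v) ^ 2 - 2 * ((starRingEnd ℂ) u * v).re := by
    rw [Complex.sq_abs, Complex.normSq_sub]
    simp only [Complex.normSq_one, map_one, one_mul, Complex.conj_re]
    rw [Complex.normSq_mul, Complex.normSq_conj, ← Complex.sq_abs, ← Complex.sq_abs]
    ring
  have h2 : Complex.abs u ^ 2 + Complex.abs v ^ 2 - 2 * ((starRingEnd ℂ) u * v).re
      ≤ t ^ 2 * (1 + (Complex.abs u * Complex.abs v) ^ 2
        - 2 * ((starRingEnd ℂ) u * v).re) := by
    have hsq := mul_le_mul h h (Complex.abs.nonneg _) (by positivity)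
    rw [← pow_two, ← pow_two] at hsq
    rw [sq1] at hsq
    calc Complex.abs u ^ 2 + Complex.abs v ^ 2 - 2 * ((starRingEnd ℂ) u * v).re
        ≤ (t * Complex.abs (1 - (starRingEnd ℂ) u * v)) ^ 2 := hsq
      _ = t ^ 2 * (1 + (Complex.abs u * Complex.abs v) ^ 2
          - 2 * ((starRingEnd ℂ) u * v).re) := by rw [mul_pow, sq2]
  exact real_pick (Complex.abs.nonneg u) (Complex.abs.nonneg v) hu hv hsle ht h2

lemma real_step {x y t : ℝ} (hx1 : x ≤ 1) (hy0 : 0 ≤ y) (hy1 : y ≤ 1) (ht : 0 ≤ t)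
    (h : |x - y| ≤ t * (1 - x * y)) : (1 - t) * (1 - y) ≤ (1 + t) * (1 - x) := by
  have h2 := (abs_le.mp h).2
  nlinarith [mul_nonneg (mul_nonneg ht (by linarith : (0:ℝ) ≤ 1 - y)) (by linarith : (0:ℝ) ≤ 1 - x)]

lemma exists_phi (f : ℂ → ℂ) (hfd : DifferentiableOn ℂ f (ball 0 1))
    (hfm : MapsTo f (ball 0 1) (ball 0 1)) {w : ℂ} (hw : Complex.abs w < 1) :
    ∃ φ : ℂ → ℂ, DifferentiableOn ℂ φ (ball 0 1) ∧
      (∀ z ∈ ball (0:ℂ) 1, Complex.abs (φ z) ≤ 1) ∧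
      Complex.abs (φ w) = hypDist f w ∧
      (∀ z, Complex.abs z < 1 → Complex.abs (f z - f w)
        = Complex.abs (φ z)
          * (Complex.abs (T w z) * Complex.abs (1 - (starRingEnd ℂ) (f w) * f z))) := by
  have hwm : w ∈ ball (0:ℂ) 1 := by simpa [mem_ball_zero_iff] using hw
  have hfw : Complex.abs (f w) < 1 := by simpa [mem_ball_zero_iff] using hfm hwm
  have hnw : Complex.abs (-w) < 1 := by simpa using hw
  set h : ℂ → ℂ := fun u => T (f w) (f (T (-w) u)) with hh
  have hd' : DifferentiableOn ℂ h (ball 0 1) :=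
    DifferentiableOn.comp (T_differentiableOn hfw)
      (DifferentiableOn.comp hfd (T_differentiableOn hnw) (T_mapsTo hnw))
      (hfm.comp (T_mapsTo hnw))
  have h0 : h 0 = 0 := by rw [hh]; simp only; rw [T_zero_right, T_self]
  have hm'' : MapsTo h (ball 0 1) (ball (h 0) 1) := by
    rw [h0]; exact fun u hu => (T_mapsTo hfw) (hfm ((T_mapsTo hnw) hu))
  refine ⟨fun z => dslope h 0 (T w z), ?_, ?_, ?_, ?_⟩
  · exact ((differentiableOn_dslope (isOpen_ball.mem_nhds (mem_ball_self one_pos))).mpr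
      hd').comp (T_differentiableOn hw) (T_mapsTo hw)
  · intro z hz
    have hTz : T w z ∈ ball (0:ℂ) 1 := (T_mapsTo hw) hz
    have := Complex.norm_dslope_le_div_of_mapsTo_ball hd' (hm''.mono_right ball_subset_closedBall) hTz
    simpa using this
  · -- `|φ w| = hypDist f w`
    simp only
    rw [T_self, dslope_same]
    have hT1 : HasDerivAt (T (-w))
        ((1 - (starRingEnd ℂ) (-w) * (-w)) / (1 - (starRingEnd ℂ) (-w) * 0) ^ 2) 0 :=
      hasDerivAt_T (by simp)
    have hfdiff : HasDerivAt f (deriv f w) w :=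
      (hfd.differentiableAt (isOpen_ball.mem_nhds hwm)).hasDerivAt
    have hfdiff' : HasDerivAt f (deriv f w) (T (-w) 0) := by rw [T_zero_right]; exact hfdiff
    have hinner := hfdiff'.comp 0 hT1
    have hT2 : HasDerivAt (T (f w))
        ((1 - (starRingEnd ℂ) (f w) * f w) / (1 - (starRingEnd ℂ) (f w) * f w) ^ 2) (f w) :=
      hasDerivAt_T (denom_ne hfw hfw.le)
    have hT2' : HasDerivAt (T (f w))
        ((1 - (starRingEnd ℂ) (f w) * f w) / (1 - (starRingEnd ℂ) (f w) * f w) ^ 2)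
        ((f ∘ T (-w)) 0) := by
      simpa [Function.comp, T_zero_right] using hT2
    have hfull := hT2'.comp 0 hinner
    have hfull' : HasDerivAt h
        ((1 - (starRingEnd ℂ) (f w) * f w) / (1 - (starRingEnd ℂ) (f w) * f w) ^ 2
          * (deriv f w * ((1 - (starRingEnd ℂ) (-w) * (-w)) / (1 - (starRingEnd ℂ) (-w) * 0) ^ 2)))
        0 := hfull
    rw [hfull'.deriv]
    have e1 : (1 : ℂ) - (starRingEnd ℂ) (-w) * (-w) = ((1 - normSq w : ℝ) : ℂ) := by
      rw [map_neg, neg_mul_neg, mul_comm, Complex.mul_conj]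
      push_cast
      ring
    have e0 : (1 : ℂ) - (starRingEnd ℂ) (-w) * 0 = 1 := by simp
    have e2 : (1 : ℂ) - (starRingEnd ℂ) (f w) * f w = ((1 - normSq (f w) : ℝ) : ℂ) := by
      rw [mul_comm, Complex.mul_conj]
      push_cast
      ring
    have hw2 : normSq w < 1 := by rw [← Complex.sq_abs]; nlinarith [Complex.abs.nonneg w]
    have hfw2 : normSq (f w) < 1 := by
      rw [← Complex.sq_abs]; nlinarith [Complex.abs.nonneg (f w)]
    have hfwne : (1 - normSq (f w) : ℝ) ≠ 0 := by linarith
    have hC : (1:ℂ) - (normSq (f w) : ℂ) ≠ 0 := by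
      intro hX
      apply hfwne
      have : ((1 - normSq (f w) : ℝ) : ℂ) = 0 := by push_cast; linear_combination hX
      exact_mod_cast this
    rw [e0, e1, e2]
    have heq : (((1 - normSq (f w) : ℝ)) : ℂ) / (((1 - normSq (f w) : ℝ)) : ℂ) ^ 2
        * (deriv f w * ((((1 - normSq w : ℝ)) : ℂ) / 1 ^ 2))
        = deriv f w * (((1 - normSq w) / (1 - normSq (f w)) : ℝ) : ℂ) := by
      push_cast
      field_simp [hC]
    rw [heq, map_mul, Complex.abs_ofReal]
    rw [_root_.abs_of_pos (div_pos (by linarith) (by linarith))]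
    rw [hypDist, Complex.sq_norm, Complex.sq_norm]
    simp only [Complex.abs_eq_norm']
    ring
  · intro z hz
    rcases eq_or_ne z w with rfl | hne
    · simp [T_self]
    · simp only
      have hzm : z ∈ ball (0:ℂ) 1 := by simpa [mem_ball_zero_iff] using hz
      have hfz : Complex.abs (f z) < 1 := by simpa [mem_ball_zero_iff] using hfm hzm
      have hTne : T w z ≠ 0 := div_ne_zero (sub_ne_zero.2 hne) (denom_ne hw hz.le)
      rw [dslope_of_ne h hTne, slope_def_field, h0, sub_zero, sub_zero]
      have hval : h (T w z) = T (f w) (f z) := by rw [hh]; simp only; rw [T_inv hw hz]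
      rw [hval, map_div₀]
      have habsT : Complex.abs (T w z) ≠ 0 := Complex.abs.ne_zero hTne
      have hout := T_mul_out (denom_ne hfw hfz.le)
      have hcan : Complex.abs (T (f w) (f z)) / Complex.abs (T w z)
          * (Complex.abs (T w z) * Complex.abs (1 - (starRingEnd ℂ) (f w) * f z))
          = Complex.abs (T (f w) (f z)) * Complex.abs (1 - (starRingEnd ℂ) (f w) * f z) := by
        field_simp
      rw [hcan, hout]

lemma hypDist_le_one (f : ℂ → ℂ) (hfd : DifferentiableOn ℂ f (ball 0 1))
    (hfm : MapsTo f (ball 0 1) (ball 0 1)) {w : ℂ} (hw : Complex.abs w < 1) :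
    hypDist f w ≤ 1 := by
  obtain ⟨φ, _, hb, hval, _⟩ := exists_phi f hfd hfm hw
  rw [← hval]
  exact hb w (by simpa [mem_ball_zero_iff] using hw)

lemma key_ineq (f : ℂ → ℂ) (hf : IsHolSelfMap f) {a b : ℂ}
    (ha : a ∈ unitDisk) (hb : b ∈ unitDisk) :
    1 - hypDist f b ≤ ((1 + Complex.abs (T a b)) / (1 - Complex.abs (T a b))) ^ 2
      * (1 - hypDist f a) := by
  have hfd : DifferentiableOn ℂ f (ball 0 1) := hf.1
  have hfm : MapsTo f (ball 0 1) (ball 0 1) := hf.2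
  have ha' : Complex.abs a < 1 := by simpa [unitDisk, mem_ball_zero_iff] using ha
  have hb' : Complex.abs b < 1 := by simpa [unitDisk, mem_ball_zero_iff] using hb
  have ham : a ∈ ball (0:ℂ) 1 := by simpa [mem_ball_zero_iff] using ha'
  have hbm : b ∈ ball (0:ℂ) 1 := by simpa [mem_ball_zero_iff] using hb'
  have hfa' : Complex.abs (f a) < 1 := by simpa [mem_ball_zero_iff] using hfm ham
  have hfb' : Complex.abs (f b) < 1 := by simpa [mem_ball_zero_iff] using hfm hbm
  have ht1 : Complex.abs (T a b) < 1 := abs_T_lt_one ha' hb'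
  have ht0 : 0 ≤ Complex.abs (T a b) := Complex.abs.nonneg _
  have hDa1 : hypDist f a ≤ 1 := hypDist_le_one f hfd hfm ha'
  have hDb1 : hypDist f b ≤ 1 := hypDist_le_one f hfd hfm hb'
  rcases eq_or_ne a b with rfl | hab
  · have h1 : 1 ≤ (1 + Complex.abs (T a a)) / (1 - Complex.abs (T a a)) := by
      rw [le_div_iff₀ (by linarith)]
      linarith
    have hK : 1 ≤ ((1 + Complex.abs (T a a)) / (1 - Complex.abs (T a a))) ^ 2 := by
      nlinarith
    nlinarith [mul_nonneg (by linarith :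
      (0:ℝ) ≤ ((1 + Complex.abs (T a a)) / (1 - Complex.abs (T a a))) ^ 2 - 1)
      (by linarith : (0:ℝ) ≤ 1 - hypDist f a)]
  · obtain ⟨φa, hadiff, habd, hava, havda⟩ := exists_phi f hfd hfm ha'
    obtain ⟨φb, hbdiff, hbbd, havb, havdb⟩ := exists_phi f hfd hfm hb'
    set t := Complex.abs (T a b) with htdef
    have hsym : Complex.abs (T b a) = t := (T_abs_symm a b).symm
    have hSsym : Complex.abs (1 - (starRingEnd ℂ) (f b) * f a)
        = Complex.abs (1 - (starRingEnd ℂ) (f a) * f b) := by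
      rw [show (1 - (starRingEnd ℂ) (f b) * f a)
          = (starRingEnd ℂ) (1 - (starRingEnd ℂ) (f a) * f b) by
        simp [map_sub, map_mul, mul_comm], Complex.abs_conj]
    have htne : t ≠ 0 := by
      rw [htdef]
      exact Complex.abs.ne_zero (div_ne_zero (sub_ne_zero.2 (Ne.symm hab))
        (denom_ne ha' hb'.le))
    have hSne : Complex.abs (1 - (starRingEnd ℂ) (f a) * f b) ≠ 0 :=
      Complex.abs.ne_zero (denom_ne hfa' hfb'.le)
    have hE : Complex.abs (φb a) = Complex.abs (φa b) := by
      have e1 := havda b hb'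
      have e2 := havdb a ha'
      rw [hsym, hSsym] at e2
      rw [show Complex.abs (f a - f b) = Complex.abs (f b - f a) from
        AbsoluteValue.map_sub _ _ _] at e2
      have hprod : t * Complex.abs (1 - (starRingEnd ℂ) (f a) * f b) ≠ 0 :=
        mul_ne_zero htne hSne
      have hcalc : Complex.abs (φb a) * (t * Complex.abs (1 - (starRingEnd ℂ) (f a) * f b))
          = Complex.abs (φa b) * (t * Complex.abs (1 - (starRingEnd ℂ) (f a) * f b)) :=
        e2.symm.trans e1
      exact mul_right_cancel₀ hprod hcalc
    -- first application at base point a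
    have sp_a := spmult φa hadiff habd hb' ha'
    rw [show Complex.abs (φa b - φa a) = Complex.abs (φa a - φa b) from
      AbsoluteValue.map_sub _ _ _] at sp_a
    have pick_a := abs_pick (habd a ham) (habd b hbm) ht0 sp_a
    have ineq1 := real_step (habd a ham) (Complex.abs.nonneg (φa b)) (habd b hbm) ht0 pick_a
    -- second application at base point b
    have sp_b := spmult φb hbdiff hbbd ha' hb'
    rw [show Complex.abs (φb a - φb b) = Complex.abs (φb b - φb a) from
      AbsoluteValue.map_sub _ _ _, hsym] at sp_b
    have pick_b := abs_pick (hbbd b hbm) (hbbd a ham) ht0 sp_b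
    have pick_b' : |Complex.abs (φb a) - Complex.abs (φb b)|
        ≤ t * (1 - Complex.abs (φb a) * Complex.abs (φb b)) := by
      rw [abs_sub_comm, mul_comm (Complex.abs (φb a))]
      exact pick_b
    have ineq2 := real_step (hbbd a ham) (Complex.abs.nonneg (φb b)) (hbbd b hbm) ht0 pick_b'
    rw [hava] at ineq1
    rw [havb, hE] at ineq2
    have h1t : (0:ℝ) < 1 - t := by linarith
    rw [div_pow, div_mul_eq_mul_div, le_div_iff₀ (by positivity)]
    have p1 := mul_le_mul_of_nonneg_left ineq2 (by linarith : (0:ℝ) ≤ 1 - t)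
    have p2 := mul_le_mul_of_nonneg_left ineq1 (by linarith : (0:ℝ) ≤ 1 + t)
    nlinarith [p1, p2]

end Stmt1Aux


end Stmt1AuxSection

open Stmt1Aux in
/-- If the forward iterates of nonconstant holomorphic self-maps `(f n)`
of the unit disk converge locally uniformly to a holomorphic self-map and
`∑ (1 - D_h (f n) a) < ∞` for some `a` in the disk, then `∑ (1 - D_h (f n) b) < ∞`
for every `b` in the disk. -/
theorem stmt_1
    (f F : ℕ → ℂ → ℂ) (Flim : ℂ → ℂ)
    (hf : ∀ n : ℕ, IsHolSelfMap (f (n + 1)))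
    (hfnc : ∀ n : ℕ, ∃ z ∈ unitDisk, ∃ w ∈ unitDisk, f (n + 1) z ≠ f (n + 1) w)
    (hF0 : ∀ z, F 0 z = z)
    (hFrec : ∀ n z, F (n + 1) z = f (n + 1) (F n z))
    (hFlim : IsHolSelfMap Flim)
    (hconv : TendstoLocallyUniformlyOn F Flim atTop unitDisk)
    (a : ℂ) (ha : a ∈ unitDisk)
    (hsum : Summable (fun n : ℕ => 1 - hypDist (f (n + 1)) a)) :
    ∀ b ∈ unitDisk, Summable (fun n : ℕ => 1 - hypDist (f (n + 1)) b) := by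
  intro b hb
  have hb' : Complex.abs b < 1 := by simpa [unitDisk, mem_ball_zero_iff] using hb
  refine Summable.of_nonneg_of_le (fun n => ?_) (fun n => key_ineq (f (n + 1)) (hf n) ha hb)
    (hsum.mul_left (((1 + Complex.abs (T a b)) / (1 - Complex.abs (T a b))) ^ 2))
  have h1 : DifferentiableOn ℂ (f (n + 1)) (ball 0 1) := (hf n).1
  have h2 : MapsTo (f (n + 1)) (ball 0 1) (ball 0 1) := (hf n).2
  have := hypDist_le_one (f (n + 1)) h1 h2 hb'
  linarith
end
end

section
/- Let (f_n)_{n≥1} be a sequence of holomorphic self-maps of the unit disk 𝔻 whose forward iterates F_n := f_n ∘ ⋯ ∘ f_1 converge locally uniformly on 𝔻 to a nonconstant holomorphic self-map F of 𝔻, and let c ∈ 𝔻. Then ∏_{w ∈ 𝔻, w ≠ 0} |w|^{ord_w(F − F(c))} = lim_{n→∞} ∏_{w ∈ 𝔻, w ≠ 0} |w|^{ord_w(F_n − F_n(c))}, where all the infinite products converge. -/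
open Filter Metric Set

noncomputable section

/-- The order of vanishing of `g` at `w`: the least `k` such that the `k`-th derivative of
`g` at `w` is nonzero (`⊤` if all derivatives vanish). -/
def ordAt (g : ℂ → ℂ) (w : ℂ) : ℕ∞ :=
  sInf {n : ℕ∞ | ∃ k : ℕ, (k : ℕ∞) = n ∧ iteratedDeriv k g w ≠ 0}

section AuxLemmas
open Function

lemma enat_le_of_forall {a b : ℕ∞} (h : ∀ k : ℕ, (k : ℕ∞) ≤ a → (k : ℕ∞) ≤ b) : a ≤ b := by
  induction a using ENat.recTopCoe with
  | top =>
    induction b using ENat.recTopCoe with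
    | top => exact le_rfl
    | coe bm =>
      have := h (bm + 1) le_top
      exact absurd this (by exact_mod_cast Nat.not_succ_le_self bm)
  | coe am => exact h am le_rfl

lemma coe_le_ordAt_iff {g : ℂ → ℂ} {w : ℂ} {k : ℕ} :
    (k : ℕ∞) ≤ ordAt g w ↔ ∀ j < k, iteratedDeriv j g w = 0 := by
  unfold ordAt
  rw [le_sInf_iff]
  constructor
  · intro h j hj
    by_contra hne
    have h2 := h (j : ℕ∞) ⟨j, rfl, hne⟩
    exact absurd (Nat.cast_le.mp h2) (not_le.mpr hj)
  · rintro h n ⟨j, rfl, hne⟩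
    by_contra hlt
    exact hne (h j (Nat.cast_lt.mp (not_le.mp hlt)))

lemma ordAt_eq_coe_iff {g : ℂ → ℂ} {w : ℂ} {k : ℕ} :
    ordAt g w = (k : ℕ∞) ↔ iteratedDeriv k g w ≠ 0 ∧ ∀ j < k, iteratedDeriv j g w = 0 := by
  constructor
  · intro h
    have h1 : ∀ j < k, iteratedDeriv j g w = 0 := coe_le_ordAt_iff.mp h.ge
    refine ⟨?_, h1⟩
    by_contra h0
    have : ((k + 1 : ℕ) : ℕ∞) ≤ ordAt g w := by
      rw [coe_le_ordAt_iff]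
      intro j hj
      rcases Nat.lt_succ_iff_lt_or_eq.mp hj with hj' | rfl
      · exact h1 j hj'
      · exact h0
    rw [h] at this
    exact absurd (Nat.cast_le.mp this) (by omega)
  · rintro ⟨hk, hlt⟩
    refine le_antisymm ?_ (coe_le_ordAt_iff.mpr hlt)
    exact sInf_le ⟨k, rfl, hk⟩

lemma iteratedDeriv_eq_coeff {f : ℂ → ℂ} {p : FormalMultilinearSeries ℂ ℂ ℂ} {w : ℂ}
    (hp : HasFPowerSeriesAt f p w) (j : ℕ) :
    iteratedDeriv j f w = ((Nat.factorial j : ℕ) : ℂ) * p.coeff j := by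
  obtain ⟨r, hr⟩ := hp
  have h := hr.factorial_smul (y := (1 : ℂ)) j
  rw [iteratedDeriv_eq_iteratedFDeriv]
  rw [← h, nsmul_eq_mul]
  rfl

lemma iterate_dslope_analyticAt {f : ℂ → ℂ} {w : ℂ} (hf : AnalyticAt ℂ f w) (k : ℕ) :
    AnalyticAt ℂ ((Function.swap dslope w)^[k] f) w ∧
      ((Nat.factorial k : ℕ) : ℂ) * ((Function.swap dslope w)^[k] f) w = iteratedDeriv k f w := by
  obtain ⟨p, hp⟩ := hf
  have h1 := hp.has_fpower_series_iterate_dslope_fslope k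
  refine ⟨⟨_, h1⟩, ?_⟩
  have h2 : ((Function.swap dslope w)^[k] f) w = (FormalMultilinearSeries.fslope^[k] p).coeff 0 := by
    have := h1.coeff_zero (fun _ => (1 : ℂ))
    rw [← this]
    rfl
  rw [h2, FormalMultilinearSeries.coeff_iterate_fslope, zero_add, iteratedDeriv_eq_coeff hp k]


lemma iterate_dslope_eq {f : ℂ → ℂ} {w : ℂ} (hf : AnalyticAt ℂ f w) (k : ℕ)
    (h : ∀ j < k, iteratedDeriv j f w = 0) :
    ∀ z, f z = (z - w) ^ k * ((Function.swap dslope w)^[k] f) z := by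
  induction k with
  | zero => simp
  | succ k ih =>
    have hk : ∀ j < k, iteratedDeriv j f w = 0 := fun j hj => h j (lt_trans hj (Nat.lt_succ_self k))
    have heq := ih hk
    set u := (Function.swap dslope w)^[k] f with hu
    have hu0 : u w = 0 := by
      have hval := (iterate_dslope_analyticAt hf k).2
      have h2 : iteratedDeriv k f w = 0 := h k (Nat.lt_succ_self k)
      rw [h2] at hval
      have hfac : ((Nat.factorial k : ℕ) : ℂ) ≠ 0 := by
        exact_mod_cast Nat.factorial_ne_zero k
      exact (mul_eq_zero.mp hval).resolve_left hfac
    intro z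
    rw [Function.iterate_succ_apply']
    by_cases hz : z = w
    · subst hz
      have : f z = 0 := by
        have := h 0 (Nat.succ_pos k)
        rwa [iteratedDeriv_zero] at this
      simp [this]
    · have hd : Function.swap dslope w u z = (z - w)⁻¹ * u z := by
        show dslope u w z = _
        rw [dslope_of_ne _ hz, slope, hu0, vsub_eq_sub, sub_zero, smul_eq_mul]
      rw [hd, heq z, pow_succ]
      field_simp [sub_ne_zero.mpr hz]

lemma analyticAt_deriv' {V : ℂ → ℂ} {w : ℂ} (hV : AnalyticAt ℂ V w) :
    AnalyticAt ℂ (deriv V) w := by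
  obtain ⟨s, hs, h⟩ := hV.eventually_analyticAt.exists_mem
  exact (AnalyticOnNhd.deriv (fun x hx => h x hx)) w (mem_of_mem_nhds hs)

lemma vanish_of_factor {w : ℂ} :
    ∀ (k : ℕ) (Fn V : ℂ → ℂ), AnalyticAt ℂ V w →
      (∀ᶠ z in nhds w, Fn z = (z - w) ^ k * V z) → ∀ j < k, iteratedDeriv j Fn w = 0 := by
  intro k
  induction k with
  | zero => intro Fn V _ _ j hj; omega
  | succ k ih =>
    intro Fn V hV hFV j hj
    match j with
    | 0 =>
      rw [iteratedDeriv_zero, hFV.self_of_nhds]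
      simp
    | j + 1 =>
      rw [iteratedDeriv_succ']
      refine ih (deriv Fn) (fun z => ((k : ℂ) + 1) * V z + (z - w) * deriv V z) ?_ ?_ j (by omega)
      · exact ((analyticAt_const.mul hV).add
          ((analyticAt_id.sub analyticAt_const).mul (analyticAt_deriv' hV)))
      · have h1 : ∀ᶠ z in nhds w, AnalyticAt ℂ V z := hV.eventually_analyticAt
        have h2 : ∀ᶠ z in nhds w, Fn =ᶠ[nhds z] fun z => (z - w) ^ (k + 1) * V z :=
          hFV.eventually_nhds
        filter_upwards [h1, h2] with z hz1 hz2
        rw [hz2.deriv_eq]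
        have hpow : HasDerivAt (fun z : ℂ => (z - w) ^ (k + 1))
            (((k : ℂ) + 1) * (z - w) ^ k) z := by
          have := ((hasDerivAt_id z).sub_const w).pow (k + 1)
          simp at this; exact this
        have hmul := hpow.mul hz1.differentiableAt.hasDerivAt
        rw [show (fun z => (z - w) ^ (k + 1) * V z) = (fun z => (z - w) ^ (k + 1)) * V from rfl, hmul.deriv]
        ring

lemma ordAt_le_comp {φ u : ℂ → ℂ} {w : ℂ} (hφ : AnalyticAt ℂ φ (u w)) (hu : AnalyticAt ℂ u w) :
    ordAt (fun z => u z - u w) w ≤ ordAt (fun z => φ (u z) - φ (u w)) w := by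
  apply enat_le_of_forall
  intro k hk
  rw [coe_le_ordAt_iff] at hk ⊢
  have hu' : AnalyticAt ℂ (fun z => u z - u w) w := hu.sub analyticAt_const
  have hU := iterate_dslope_eq hu' k hk
  set U := (Function.swap dslope w)^[k] (fun z => u z - u w) with hUdef
  have hUa : AnalyticAt ℂ U w := (iterate_dslope_analyticAt hu' k).1
  have hφ' : AnalyticAt ℂ (fun x => φ x - φ (u w)) (u w) := hφ.sub analyticAt_const
  have hΨeq := iterate_dslope_eq hφ' 1 (by
    intro j hj
    interval_cases j
    rw [iteratedDeriv_zero]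
    simp)
  set Ψ := (Function.swap dslope (u w))^[1] (fun x => φ x - φ (u w)) with hΨdef
  have hΨa : AnalyticAt ℂ Ψ (u w) := (iterate_dslope_analyticAt hφ' 1).1
  have hfac : ∀ z, φ (u z) - φ (u w) = (z - w) ^ k * (U z * Ψ (u z)) := by
    intro z
    have h1 := hΨeq (u z)
    simp only [pow_one] at h1
    calc φ (u z) - φ (u w) = (u z - u w) * Ψ (u z) := h1
    _ = ((z - w) ^ k * U z) * Ψ (u z) := by rw [← hU z]
    _ = (z - w) ^ k * (U z * Ψ (u z)) := by ring
  have hVa : AnalyticAt ℂ (fun z => U z * Ψ (u z)) w := by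
    refine hUa.mul ?_
    have := hΨa.comp hu
    exact this
  exact vanish_of_factor k _ _ hVa (Filter.Eventually.of_forall hfac)

lemma exists_iteratedDeriv_ne_zero {u : ℂ → ℂ} {U : Set ℂ}
    (hconn : IsPreconnected U) (hu : AnalyticOnNhd ℂ u U) {w : ℂ} (hw : w ∈ U)
    {z : ℂ} (hz : z ∈ U) (hzne : u z ≠ 0) :
    ∃ m : ℕ, iteratedDeriv m u w ≠ 0 := by
  by_contra h
  push_neg at h
  obtain ⟨p, hp⟩ := hu w hw
  have hp0 : p = 0 := by
    ext n v
    have h1 := iteratedDeriv_eq_coeff hp n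
    rw [h n] at h1
    have hfac : ((Nat.factorial n : ℕ) : ℂ) ≠ 0 := by exact_mod_cast Nat.factorial_ne_zero n
    have hc : p.coeff n = 0 := by
      rcases mul_eq_zero.mp h1.symm with h' | h'
      · exact absurd h' hfac
      · exact h'
    have : p n = 0 := FormalMultilinearSeries.coeff_eq_zero.mp hc
    rw [this]
    rfl
  have hev : u =ᶠ[nhds w] 0 := by
    rw [hp0] at hp
    exact hp.eventually_eq_zero
  exact hzne (hu.eqOn_zero_of_preconnected_of_eventuallyEq_zero hconn hw hev hz)

lemma tlu_iteratedDeriv {U : Set ℂ} (hU : IsOpen U) :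
    ∀ (j : ℕ) (Gs : ℕ → ℂ → ℂ) (Gl : ℂ → ℂ), (∀ n, AnalyticOnNhd ℂ (Gs n) U) →
      TendstoLocallyUniformlyOn Gs Gl atTop U →
      TendstoLocallyUniformlyOn (fun n => iteratedDeriv j (Gs n)) (iteratedDeriv j Gl) atTop U := by
  intro j
  induction j with
  | zero => intro Gs Gl _ h; simpa [iteratedDeriv_zero] using h
  | succ j ih =>
    intro Gs Gl hA h
    have h' := h.deriv (Filter.Eventually.of_forall fun n => (hA n).differentiableOn) hU
    have := ih (fun n => deriv (Gs n)) (deriv Gl)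
      (fun n => (hA n).deriv_of_isOpen hU) h'
    simpa [iteratedDeriv_succ', Function.comp] using this

lemma iteratedDeriv_zero_fun {m : ℕ} {w : ℂ} : iteratedDeriv m (fun _ : ℂ => (0 : ℂ)) w = 0 := by
  induction m with
  | zero => simp [iteratedDeriv_zero]
  | succ m ih =>
    rw [iteratedDeriv_succ']
    simpa only [deriv_const'] using ih

lemma eventually_ordAt_eq {U : Set ℂ} (hUo : IsOpen U)
    {gs : ℕ → ℂ → ℂ} {G : ℂ → ℂ}
    (hgA : ∀ n, AnalyticOnNhd ℂ (gs n) U)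
    (hGA : AnalyticOnNhd ℂ G U)
    (hmono : ∀ n m, n ≤ m → ∀ w ∈ U, ordAt (gs n) w ≤ ordAt (gs m) w)
    (hub : ∀ n, ∀ w ∈ U, ordAt (gs n) w ≤ ordAt G w)
    (htlu : TendstoLocallyUniformlyOn gs G atTop U)
    (hzero : ∀ n z, z ∈ U → gs n z = 0 → G z = 0)
    {w : ℂ} (hw : w ∈ U) {m : ℕ} (hm : ordAt G w = (m : ℕ∞)) :
    ∀ᶠ n in atTop, ordAt (gs n) w = ordAt G w := by
  -- a closed ball inside U
  obtain ⟨ρ, hρ0, hρU⟩ : ∃ ρ > 0, closedBall w ρ ⊆ U := by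
    obtain ⟨r, hr0, hrU⟩ := Metric.isOpen_iff.mp hUo w hw
    exact ⟨r / 2, by linarith, (closedBall_subset_ball (by linarith)).trans hrU⟩
  have hub' : ∀ n, ordAt (gs n) w ≤ (m : ℕ∞) := fun n => hm ▸ hub n w hw
  have hne_top : ∀ n, ordAt (gs n) w ≠ ⊤ := fun n =>
    ne_top_of_le_ne_top (by simp) (hub' n)
  set o : ℕ → ℕ := fun n => (ordAt (gs n) w).toNat with ho
  have hcoe : ∀ n, ((o n : ℕ) : ℕ∞) = ordAt (gs n) w := fun n => ENat.coe_toNat (hne_top n)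
  have hom : ∀ a b, a ≤ b → o a ≤ o b := by
    intro a b hab
    have := hmono a b hab w hw
    exact ENat.toNat_le_toNat this (hne_top b)
  have hobdd : BddAbove (Set.range o) := by
    refine ⟨m, ?_⟩
    rintro x ⟨n, rfl⟩
    have : ((o n : ℕ) : ℕ∞) ≤ (m : ℕ∞) := (hcoe n) ▸ hub' n
    exact_mod_cast this
  have hkmem : sSup (Set.range o) ∈ Set.range o :=
    Nat.sSup_mem ⟨o 0, Set.mem_range_self 0⟩ hobdd
  set k := sSup (Set.range o) with hkdef
  obtain ⟨N, hN⟩ := hkmem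
  have hstab : ∀ n, N ≤ n → ordAt (gs n) w = (k : ℕ∞) := by
    intro n hn
    have h1 : o n ≤ k := le_csSup hobdd (Set.mem_range_self n)
    have h2 : k ≤ o n := hN ▸ hom N n hn
    rw [← hcoe n, le_antisymm h1 h2]
  have hkm : k ≤ m := by
    have : ((o N : ℕ) : ℕ∞) ≤ (m : ℕ∞) := (hcoe N) ▸ hub' N
    rw [hN] at this
    exact_mod_cast this
  rcases eq_or_lt_of_le hkm with hkeq | hklt
  · filter_upwards [eventually_ge_atTop N] with n hn
    rw [hstab n hn, hkeq, hm]
  exfalso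
  -- derivative data for G
  have hGm := ordAt_eq_coe_iff.mp hm
  have hGw : AnalyticAt ℂ G w := hGA w hw
  set Hl := (Function.swap dslope w)^[k] G with hHldef
  have hHfac : ∀ z, G z = (z - w) ^ k * Hl z :=
    iterate_dslope_eq hGw k (fun j hj => hGm.2 j (lt_trans hj hklt))
  have hHl_an_w : AnalyticAt ℂ Hl w := (iterate_dslope_analyticAt hGw k).1
  have hHlw : Hl w = 0 := by
    have h2 := (iterate_dslope_analyticAt hGw k).2
    rw [hGm.2 k hklt] at h2
    have hfac : ((Nat.factorial k : ℕ) : ℂ) ≠ 0 := by exact_mod_cast Nat.factorial_ne_zero k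
    exact (mul_eq_zero.mp h2).resolve_left hfac
  have hHl_an : ∀ z ∈ U, AnalyticAt ℂ Hl z := by
    intro z hz
    by_cases hzw : z = w
    · exact hzw ▸ hHl_an_w
    · have ha : AnalyticAt ℂ (fun z => G z * ((z - w) ^ k)⁻¹) z :=
        (hGA z hz).mul (((analyticAt_id.sub analyticAt_const).pow k).inv
          (pow_ne_zero _ (sub_ne_zero.mpr hzw)))
      refine ha.congr ?_
      filter_upwards [IsOpen.mem_nhds isOpen_ne hzw] with x hx
      have hpk : (x - w) ^ k ≠ 0 := pow_ne_zero _ (sub_ne_zero.mpr hx)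
      rw [hHfac x]
      field_simp
  -- punctured nonvanishing radius
  have hGnz : ∀ᶠ z in nhdsWithin w {w}ᶜ, G z ≠ 0 := by
    rcases hGw.eventually_eq_zero_or_eventually_ne_zero with h | h
    · exfalso
      apply hGm.1
      have hz0 : G =ᶠ[nhds w] (fun _ => (0 : ℂ)) := h
      rw [hz0.iteratedDeriv_eq m]
      exact iteratedDeriv_zero_fun
    · exact h
  rw [eventually_nhdsWithin_iff, Metric.eventually_nhds_iff] at hGnz
  obtain ⟨ε1, hε1, h1⟩ := hGnz
  set δ := min (ε1 / 2) ρ with hδdef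
  have hδ0 : 0 < δ := lt_min (by linarith) hρ0
  have hδU : closedBall w δ ⊆ U :=
    (closedBall_subset_closedBall (min_le_right _ _)).trans hρU
  have hδε1 : δ < ε1 := lt_of_le_of_lt (min_le_left _ _) (by linarith)
  have hpunct : ∀ z, z ≠ w → z ∈ closedBall w δ → G z ≠ 0 := by
    intro z hzw hz
    exact h1 (lt_of_le_of_lt (mem_closedBall.mp hz) hδε1) hzw
  -- minimum of ‖Hl‖ on the sphere
  have hsph_sub : sphere w δ ⊆ closedBall w δ := sphere_subset_closedBall
  have hcont : ContinuousOn (fun z => ‖Hl z‖) (sphere w δ) := by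
    refine ContinuousOn.norm ?_
    exact fun z hz => ((hHl_an z (hδU (hsph_sub hz))).continuousAt).continuousWithinAt
  have hsne : (sphere w δ).Nonempty := NormedSpace.sphere_nonempty.mpr hδ0.le
  obtain ⟨z₁, hz₁, hz₁min'⟩ := (isCompact_sphere w δ).exists_isMinOn hsne hcont
  have hz₁min : ∀ z ∈ sphere w δ, ‖Hl z₁‖ ≤ ‖Hl z‖ := fun z hz => isMinOn_iff.mp hz₁min' z hz
  set ε := ‖Hl z₁‖ with hεdef
  have hz₁w : z₁ ≠ w := by
    intro h
    have : dist z₁ w = δ := mem_sphere.mp hz₁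
    rw [h, dist_self] at this
    exact hδ0.ne this
  have hε : 0 < ε := by
    rw [hεdef, norm_pos_iff]
    intro h0
    apply hpunct z₁ hz₁w (hsph_sub hz₁)
    rw [hHfac z₁, h0, mul_zero]
  -- uniform convergence on the sphere
  have hTU : TendstoUniformlyOn gs G atTop (sphere w δ) :=
    (tendstoLocallyUniformlyOn_iff_forall_isCompact hUo).mp htlu _
      (hsph_sub.trans hδU) (isCompact_sphere w δ)
  rw [Metric.tendstoUniformlyOn_iff] at hTU
  have hev := hTU (ε / 3 * δ ^ k) (by positivity)
  obtain ⟨n, hn1, hn2⟩ := ((eventually_ge_atTop N).and hev).exists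
  -- data for gs n
  have hgnw : AnalyticAt ℂ (gs n) w := hgA n w hw
  have hordn := ordAt_eq_coe_iff.mp (hstab n hn1)
  set Hn := (Function.swap dslope w)^[k] (gs n) with hHndef
  have hHnfac : ∀ z, gs n z = (z - w) ^ k * Hn z := iterate_dslope_eq hgnw k hordn.2
  have hHn_an_w : AnalyticAt ℂ Hn w := (iterate_dslope_analyticAt hgnw k).1
  have hHnw : Hn w ≠ 0 := by
    intro h0
    have h2 := (iterate_dslope_analyticAt hgnw k).2
    rw [← hHndef] at h2
    rw [h0, mul_zero] at h2
    exact hordn.1 h2.symm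
  have hHn_an : ∀ z ∈ U, AnalyticAt ℂ Hn z := by
    intro z hz
    by_cases hzw : z = w
    · exact hzw ▸ hHn_an_w
    · have ha : AnalyticAt ℂ (fun z => gs n z * ((z - w) ^ k)⁻¹) z :=
        (hgA n z hz).mul (((analyticAt_id.sub analyticAt_const).pow k).inv
          (pow_ne_zero _ (sub_ne_zero.mpr hzw)))
      refine ha.congr ?_
      filter_upwards [IsOpen.mem_nhds isOpen_ne hzw] with x hx
      have hpk : (x - w) ^ k ≠ 0 := pow_ne_zero _ (sub_ne_zero.mpr hx)
      rw [hHnfac x]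
      field_simp
  -- bound on the sphere
  have hδk : (0 : ℝ) < δ ^ k := by positivity
  have hsphere_bound : ∀ z ∈ sphere w δ, ‖Hn z - Hl z‖ < ε / 3 := by
    intro z hz
    have hd : ‖gs n z - G z‖ < ε / 3 * δ ^ k := by
      have := hn2 z hz
      rwa [dist_eq_norm, norm_sub_rev] at this
    have hfactor : gs n z - G z = (z - w) ^ k * (Hn z - Hl z) := by
      rw [hHnfac z, hHfac z]; ring
    have hnormz : ‖(z - w) ^ k‖ = δ ^ k := by
      rw [norm_pow]
      have : ‖z - w‖ = δ := by
        rw [← dist_eq_norm]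
        exact mem_sphere.mp hz
      rw [this]
    have : δ ^ k * ‖Hn z - Hl z‖ < ε / 3 * δ ^ k := by
      calc δ ^ k * ‖Hn z - Hl z‖ = ‖(z - w) ^ k * (Hn z - Hl z)‖ := by rw [norm_mul, hnormz]
      _ = ‖gs n z - G z‖ := by rw [← hfactor]
      _ < ε / 3 * δ ^ k := hd
    nlinarith [norm_nonneg (Hn z - Hl z)]
  by_cases hzf : ∀ z ∈ closedBall w δ, Hn z ≠ 0
  · -- maximum modulus, twice
    have hclos : closure (ball w δ) = closedBall w δ := closure_ball w hδ0.ne'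
    have hfron : frontier (ball w δ) = sphere w δ := frontier_ball w hδ0.ne'
    have hwmem : w ∈ closure (ball w δ) := by
      rw [hclos]; exact mem_closedBall_self hδ0.le
    -- first bound : ‖Hn w‖ ≤ ε/3
    have hDCC1 : DiffContOnCl ℂ (fun z => Hn z - Hl z) (ball w δ) := by
      constructor
      · intro z hz
        exact (((hHn_an z (hδU (ball_subset_closedBall hz))).sub
          (hHl_an z (hδU (ball_subset_closedBall hz)))).differentiableAt).differentiableWithinAt
      · rw [hclos]
        intro z hz
        exact (((hHn_an z (hδU hz)).sub (hHl_an z (hδU hz))).continuousAt).continuousWithinAt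
    have hA := Complex.norm_le_of_forall_mem_frontier_norm_le isBounded_ball hDCC1
      (C := ε / 3) (fun z hz => by
        rw [hfron] at hz
        exact (hsphere_bound z hz).le) hwmem
    have hA' : ‖Hn w‖ ≤ ε / 3 := by
      rw [hHlw, sub_zero] at hA
      exact hA
    -- second bound : 2ε/3 ≤ ‖Hn w‖
    have hlow : ∀ z ∈ sphere w δ, 2 * ε / 3 ≤ ‖Hn z‖ := by
      intro z hz
      have h1 : ε ≤ ‖Hl z‖ := hz₁min z hz
      have h2 : ‖Hn z - Hl z‖ < ε / 3 := hsphere_bound z hz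
      have h3 : ‖Hl z‖ - ‖Hn z‖ ≤ ‖Hn z - Hl z‖ := by
        have := norm_sub_norm_le (Hl z) (Hn z)
        rwa [norm_sub_rev] at this
      linarith
    have hDCC2 : DiffContOnCl ℂ (fun z => (Hn z)⁻¹) (ball w δ) := by
      constructor
      · intro z hz
        have hzU := hδU (ball_subset_closedBall hz)
        exact (((hHn_an z hzU).differentiableAt).inv
          (hzf z (ball_subset_closedBall hz))).differentiableWithinAt
      · rw [hclos]
        intro z hz
        exact (((hHn_an z (hδU hz)).continuousAt).inv₀ (hzf z hz)).continuousWithinAt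
    have hB := Complex.norm_le_of_forall_mem_frontier_norm_le isBounded_ball hDCC2
      (C := (2 * ε / 3)⁻¹) (fun z hz => by
        rw [hfron] at hz
        rw [norm_inv]
        have h2 : (0:ℝ) < 2 * ε / 3 := by linarith
        exact (inv_le_inv₀ (lt_of_lt_of_le h2 (hlow z hz)) h2).mpr (hlow z hz)) hwmem
    rw [norm_inv] at hB
    have hNw : 0 < ‖Hn w‖ := norm_pos_iff.mpr hHnw
    have h2 : (0:ℝ) < 2 * ε / 3 := by linarith
    have hfin : 2 * ε / 3 ≤ ‖Hn w‖ := (inv_le_inv₀ hNw h2).mp hB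
    linarith
  · push_neg at hzf
    obtain ⟨z₀, hz₀ball, hz₀⟩ := hzf
    have hz₀w : z₀ ≠ w := fun h => hHnw (h ▸ hz₀)
    have hgn0 : gs n z₀ = 0 := by rw [hHnfac z₀, hz₀, mul_zero]
    have hG0 : G z₀ = 0 := hzero n z₀ (hδU hz₀ball) hgn0
    exact hpunct z₀ hz₀w hz₀ball hG0

lemma hasProd_iInf {ι : Type*} {f : ι → ℝ} (h0 : ∀ i, 0 < f i) (h1 : ∀ i, f i ≤ 1) :
    HasProd f (⨅ s : Finset ι, ∏ i ∈ s, f i) := by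
  classical
  have anti : Antitone (fun s : Finset ι => ∏ i ∈ s, f i) := by
    intro s t hst
    have hsd := Finset.prod_sdiff (f := f) hst
    have hle : ∏ i ∈ t \ s, f i ≤ 1 :=
      Finset.prod_le_one (fun i _ => (h0 i).le) (fun i _ => h1 i)
    have hpos : (0:ℝ) ≤ ∏ i ∈ s, f i := Finset.prod_nonneg fun i _ => (h0 i).le
    calc ∏ i ∈ t, f i = (∏ i ∈ t \ s, f i) * ∏ i ∈ s, f i := hsd.symm
    _ ≤ 1 * ∏ i ∈ s, f i := mul_le_mul_of_nonneg_right hle hpos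
    _ = ∏ i ∈ s, f i := one_mul _
  have hbdd : BddBelow (Set.range fun s : Finset ι => ∏ i ∈ s, f i) := by
    refine ⟨0, ?_⟩
    rintro x ⟨s, rfl⟩
    exact Finset.prod_nonneg fun i _ => (h0 i).le
  exact tendsto_atTop_ciInf anti hbdd

lemma tendsto_tprod_of_eventually {ι : Type*} [Nonempty ι] {a : ℕ → ι → ℝ} {b : ι → ℝ}
    (h0 : ∀ n i, 0 < a n i) (h1 : ∀ n i, a n i ≤ 1)
    (hb0 : ∀ i, 0 < b i) (hb1 : ∀ i, b i ≤ 1)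
    (hle : ∀ n i, b i ≤ a n i)
    (heq : ∀ i, ∀ᶠ n in atTop, a n i = b i) :
    Tendsto (fun n => ∏' i, a n i) atTop (nhds (∏' i, b i)) := by
  have hBp := hasProd_iInf hb0 hb1
  have hBeq : ∏' i, b i = ⨅ s : Finset ι, ∏ i ∈ s, b i := hBp.tprod_eq
  have hAn : ∀ n, (∏' i, a n i) = ⨅ s : Finset ι, ∏ i ∈ s, a n i :=
    fun n => (hasProd_iInf (h0 n) (h1 n)).tprod_eq
  have hbddA : ∀ n, BddBelow (Set.range fun s : Finset ι => ∏ i ∈ s, a n i) := by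
    intro n
    refine ⟨0, ?_⟩
    rintro x ⟨s, rfl⟩
    exact Finset.prod_nonneg fun i _ => (h0 n i).le
  have hlower : ∀ n, (∏' i, b i) ≤ ∏' i, a n i := by
    intro n
    rw [hBeq, hAn n]
    refine le_ciInf fun s => ?_
    refine le_trans (ciInf_le ?_ s) ?_
    · refine ⟨0, ?_⟩
      rintro x ⟨t, rfl⟩
      exact Finset.prod_nonneg fun i _ => (hb0 i).le
    · exact Finset.prod_le_prod (fun i _ => (hb0 i).le) (fun i _ => hle n i)
  rw [Metric.tendsto_atTop]
  intro ε hε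
  have hlt : (⨅ s : Finset ι, ∏ i ∈ s, b i) < (∏' i, b i) + ε := by
    rw [← hBeq]; linarith
  obtain ⟨s, hs⟩ := exists_lt_of_ciInf_lt hlt
  have hev : ∀ᶠ n in atTop, ∀ i ∈ s, a n i = b i := by
    rw [Filter.eventually_all_finset]
    exact fun i _ => heq i
  rw [Filter.eventually_atTop] at hev
  obtain ⟨N, hN⟩ := hev
  refine ⟨N, fun n hn => ?_⟩
  have hupper : (∏' i, a n i) < (∏' i, b i) + ε := by
    have h2 : (∏' i, a n i) ≤ ∏ i ∈ s, a n i := by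
      rw [hAn n]; exact ciInf_le (hbddA n) s
    have h3 : ∏ i ∈ s, a n i = ∏ i ∈ s, b i :=
      Finset.prod_congr rfl (fun i hi => hN n hn i hi)
    rw [h3] at h2
    exact lt_of_le_of_lt h2 hs
  rw [Real.dist_eq, abs_of_nonneg (sub_nonneg.mpr (hlower n))]
  linarith

end AuxLemmas

/-- With forward iterates `F n` converging locally uniformly to a
nonconstant holomorphic self-map `Flim`, for any `c` in the disk the Blaschke-type products
`∏_{w ∈ 𝔻, w ≠ 0} |w| ^ ord_w (F n - F n c)` all converge and tend, as `n → ∞`, to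
`∏_{w ∈ 𝔻, w ≠ 0} |w| ^ ord_w (Flim - Flim c)`. -/
theorem stmt_8
    (f F : ℕ → ℂ → ℂ) (Flim : ℂ → ℂ) (c : ℂ)
    (hf : ∀ n : ℕ, IsHolSelfMap (f (n + 1)))
    (hF0 : ∀ z, F 0 z = z)
    (hFrec : ∀ n z, F (n + 1) z = f (n + 1) (F n z))
    (hFlim : IsHolSelfMap Flim)
    (hconv : TendstoLocallyUniformlyOn F Flim atTop unitDisk)
    (hnc : ∃ z ∈ unitDisk, ∃ w ∈ unitDisk, Flim z ≠ Flim w)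
    (hc : c ∈ unitDisk) :
    (∀ n : ℕ, Multipliable (fun p : {w : ℂ // w ∈ unitDisk ∧ w ≠ 0} =>
        ‖p.1‖ ^ (ordAt (fun z => F (n + 1) z - F (n + 1) c) p.1).toNat)) ∧
    Multipliable (fun p : {w : ℂ // w ∈ unitDisk ∧ w ≠ 0} =>
        ‖p.1‖ ^ (ordAt (fun z => Flim z - Flim c) p.1).toNat) ∧
    Tendsto (fun n : ℕ => ∏' p : {w : ℂ // w ∈ unitDisk ∧ w ≠ 0},
        ‖p.1‖ ^ (ordAt (fun z => F (n + 1) z - F (n + 1) c) p.1).toNat)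
      atTop
      (nhds (∏' p : {w : ℂ // w ∈ unitDisk ∧ w ≠ 0},
        ‖p.1‖ ^ (ordAt (fun z => Flim z - Flim c) p.1).toNat)) := by
  classical
  have hDopen : IsOpen unitDisk := isOpen_ball
  have hDconn : IsPreconnected unitDisk := (convex_ball (0 : ℂ) 1).isPreconnected
  have hptc : Tendsto (fun n => F n c) atTop (nhds (Flim c)) := hconv.tendsto_at hc
  -- basic properties of the iterates
  have hFn : ∀ n : ℕ, DifferentiableOn ℂ (F n) unitDisk ∧ MapsTo (F n) unitDisk unitDisk := by
    intro n
    induction n with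
    | zero =>
      have hid : F 0 = fun z => z := funext hF0
      rw [hid]
      exact ⟨differentiableOn_id, fun z hz => hz⟩
    | succ n ih =>
      have hcomp : F (n + 1) = (f (n + 1)) ∘ (F n) := funext (hFrec n)
      rw [hcomp]
      exact ⟨(hf n).1.comp ih.1 ih.2, (hf n).2.comp ih.2⟩
  set g : ℕ → ℂ → ℂ := fun n z => F (n + 1) z - F (n + 1) c with hgdef
  set G : ℂ → ℂ := fun z => Flim z - Flim c with hGdef
  have hg_an : ∀ n, AnalyticOnNhd ℂ (g n) unitDisk := fun n =>
    (((hFn (n + 1)).1.sub_const _).analyticOnNhd hDopen)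
  have hG_an : AnalyticOnNhd ℂ G unitDisk :=
    ((hFlim.1.sub_const _).analyticOnNhd hDopen)
  -- persistence of coincidence
  have hpers : ∀ n z, F (n + 1) z = F (n + 1) c → ∀ m, n + 1 ≤ m → F m z = F m c := by
    intro n z h m hm
    induction m with
    | zero => omega
    | succ m ih =>
      rcases Nat.lt_or_ge m (n + 1) with hlt | hge
      · have : m + 1 = n + 1 := by omega
        rw [this]; exact h
      · rw [hFrec m z, hFrec m c, ih hge]
  have hzero : ∀ n z, z ∈ unitDisk → g n z = 0 → G z = 0 := by
    intro n z hz h0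
    have h1 : F (n + 1) z = F (n + 1) c := sub_eq_zero.mp h0
    have h2 : ∀ m, n + 1 ≤ m → F m z = F m c := hpers n z h1
    have h3 : Tendsto (fun m => F m z) atTop (nhds (Flim z)) := hconv.tendsto_at hz
    have h5 : Tendsto (fun m => F m z) atTop (nhds (Flim c)) := by
      refine hptc.congr' ?_
      filter_upwards [eventually_ge_atTop (n + 1)] with m hm
      exact (h2 m hm).symm
    have h6 : Flim z = Flim c := tendsto_nhds_unique h3 h5
    exact sub_eq_zero.mpr h6
  -- G is not identically zero
  obtain ⟨z₁, hz₁D, w₁, hw₁D, hne⟩ := hnc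
  have hGne : ∃ z ∈ unitDisk, G z ≠ 0 := by
    by_cases h : Flim z₁ = Flim c
    · refine ⟨w₁, hw₁D, fun h' => hne ?_⟩
      have h'' : Flim w₁ = Flim c := sub_eq_zero.mp h'
      rw [h, h'']
    · exact ⟨z₁, hz₁D, fun h' => h (sub_eq_zero.mp h')⟩
  -- monotonicity of orders
  have hmono1 : ∀ n w, w ∈ unitDisk → ordAt (g n) w ≤ ordAt (g (n + 1)) w := by
    intro n w hw
    by_cases h0 : F (n + 1) w = F (n + 1) c
    · have hu : AnalyticAt ℂ (F (n + 1)) w := ((hFn (n + 1)).1.analyticOnNhd hDopen) w hw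
      have haD : F (n + 1) c ∈ unitDisk := (hFn (n + 1)).2 hc
      have hφ : AnalyticAt ℂ (f (n + 2)) (F (n + 1) w) := by
        rw [h0]
        exact ((hf (n + 1)).1.analyticOnNhd hDopen) _ haD
      have hcomp := ordAt_le_comp hφ hu
      have e1 : (fun z => F (n + 1) z - F (n + 1) w) = g n := by
        funext z; rw [h0]
      have e2 : (fun z => f (n + 2) (F (n + 1) z) - f (n + 2) (F (n + 1) w)) = g (n + 1) := by
        funext z
        show f (n + 2) (F (n + 1) z) - f (n + 2) (F (n + 1) w) = F (n + 2) z - F (n + 2) c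
        rw [h0, hFrec (n + 1) z, hFrec (n + 1) c]
      rw [e1, e2] at hcomp
      exact hcomp
    · have h00 : ordAt (g n) w = ((0 : ℕ) : ℕ∞) := by
        rw [ordAt_eq_coe_iff]
        constructor
        · rw [iteratedDeriv_zero]
          exact sub_ne_zero.mpr h0
        · intro j hj; omega
      rw [h00]
      exact zero_le
  have hmono : ∀ n m, n ≤ m → ∀ w ∈ unitDisk, ordAt (g n) w ≤ ordAt (g m) w := by
    intro n m hnm w hw
    induction m with
    | zero =>
      have : n = 0 := by omega
      rw [this]
    | succ m ih =>
      by_cases h : n ≤ m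
      · exact (ih h).trans (hmono1 m w hw)
      · have : n = m + 1 := by omega
        rw [this]
  -- locally uniform convergence of g to G
  have hTLU : TendstoLocallyUniformlyOn g G atTop unitDisk := by
    rw [Metric.tendstoLocallyUniformlyOn_iff]
    intro ε hε x hx
    rw [Metric.tendstoLocallyUniformlyOn_iff] at hconv
    obtain ⟨t, ht, hconv'⟩ := hconv (ε / 2) (by linarith) x hx
    refine ⟨t, ht, ?_⟩
    have h1' : ∀ᶠ n : ℕ in atTop, ∀ y ∈ t, dist (Flim y) (F (n + 1) y) < ε / 2 :=
      (tendsto_add_atTop_nat 1).eventually hconv'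
    have h2 : ∀ᶠ n : ℕ in atTop, dist (F n c) (Flim c) < ε / 2 :=
      Metric.tendsto_nhds.mp hptc (ε / 2) (by linarith)
    have h2' : ∀ᶠ n : ℕ in atTop, dist (F (n + 1) c) (Flim c) < ε / 2 :=
      (tendsto_add_atTop_nat 1).eventually h2
    filter_upwards [h1', h2'] with n hn1 hn2 y hy
    have hsub : G y - g n y = (Flim y - F (n + 1) y) - (Flim c - F (n + 1) c) := by
      simp only [hGdef, hgdef]
      ring
    calc dist (G y) (g n y) = ‖G y - g n y‖ := by rw [dist_eq_norm]
    _ ≤ ‖Flim y - F (n + 1) y‖ + ‖Flim c - F (n + 1) c‖ := by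
        rw [hsub]; exact norm_sub_le _ _
    _ < ε / 2 + ε / 2 := by
        have ha : ‖Flim y - F (n + 1) y‖ < ε / 2 := by
          rw [← dist_eq_norm]; exact hn1 y hy
        have hb : ‖Flim c - F (n + 1) c‖ < ε / 2 := by
          rw [← dist_eq_norm, dist_comm]; exact hn2
        linarith
    _ = ε := by ring
  -- upper bound of orders by the order of the limit
  have hTLUj : ∀ j, TendstoLocallyUniformlyOn (fun n => iteratedDeriv j (g n))
      (iteratedDeriv j G) atTop unitDisk :=
    fun j => tlu_iteratedDeriv hDopen j g G hg_an hTLU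
  have hub : ∀ n, ∀ w ∈ unitDisk, ordAt (g n) w ≤ ordAt G w := by
    intro n w hw
    apply enat_le_of_forall
    intro k hk
    rw [coe_le_ordAt_iff] at hk ⊢
    intro j hj
    have hz : ∀ᶠ m : ℕ in atTop, iteratedDeriv j (g m) w = 0 := by
      filter_upwards [eventually_ge_atTop n] with m hm
      have h1 : (k : ℕ∞) ≤ ordAt (g m) w :=
        le_trans (coe_le_ordAt_iff.mpr hk) (hmono n m hm w hw)
      exact coe_le_ordAt_iff.mp h1 j hj
    have hlim : Tendsto (fun m => iteratedDeriv j (g m) w) atTop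
        (nhds (iteratedDeriv j G w)) := (hTLUj j).tendsto_at hw
    have hlim0 : Tendsto (fun m => iteratedDeriv j (g m) w) atTop (nhds 0) := by
      refine tendsto_const_nhds.congr' ?_
      filter_upwards [hz] with m hm using hm.symm
    exact tendsto_nhds_unique hlim hlim0
  -- finiteness of orders
  have hfinOf : ∀ u : ℂ → ℂ, AnalyticOnNhd ℂ u unitDisk → (∃ z ∈ unitDisk, u z ≠ 0) →
      ∀ w ∈ unitDisk, ∃ m : ℕ, ordAt u w = (m : ℕ∞) := by
    intro u hu hex w hw
    obtain ⟨z, hz, hzne⟩ := hex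
    obtain ⟨m0, hm0⟩ := exists_iteratedDeriv_ne_zero hDconn hu hw hz hzne
    have hle : ordAt u w ≤ (m0 : ℕ∞) := sInf_le ⟨m0, rfl, hm0⟩
    have hne' : ordAt u w ≠ ⊤ := ne_top_of_le_ne_top (by simp) hle
    exact ⟨(ordAt u w).toNat, (ENat.coe_toNat hne').symm⟩
  have hGtop : ∀ w ∈ unitDisk, ordAt G w ≠ ⊤ := by
    intro w hw
    obtain ⟨m, hm⟩ := hfinOf G hG_an hGne w hw
    rw [hm]
    simp
  -- the key eventual equality of orders
  have hEv : ∀ w ∈ unitDisk, ∀ᶠ n in atTop, ordAt (g n) w = ordAt G w := by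
    intro w hw
    obtain ⟨m, hm⟩ := hfinOf G hG_an hGne w hw
    exact eventually_ordAt_eq hDopen hg_an hG_an hmono hub hTLU hzero hw hm
  -- set up the products
  haveI : Nonempty {w : ℂ // w ∈ unitDisk ∧ w ≠ 0} := by
    refine ⟨⟨((1 / 2 : ℝ) : ℂ), ?_, ?_⟩⟩
    · show ((1 / 2 : ℝ) : ℂ) ∈ Metric.ball (0 : ℂ) 1
      rw [Metric.mem_ball, dist_zero_right, Complex.norm_real, Real.norm_eq_abs,
        abs_of_nonneg (by norm_num : (0:ℝ) ≤ 1 / 2)]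
      norm_num
    · norm_num
  have habs_pos : ∀ p : {w : ℂ // w ∈ unitDisk ∧ w ≠ 0}, 0 < ‖p.1‖ :=
    fun p => norm_pos_iff.mpr p.2.2
  have habs_lt : ∀ p : {w : ℂ // w ∈ unitDisk ∧ w ≠ 0}, ‖p.1‖ < 1 := by
    intro p
    have h' : dist p.1 0 < 1 := p.2.1
    rw [dist_zero_right] at h'
    exact h'
  have h0 : ∀ (n : ℕ) (p : {w : ℂ // w ∈ unitDisk ∧ w ≠ 0}),
      0 < ‖p.1‖ ^ (ordAt (g n) p.1).toNat :=
    fun n p => pow_pos (habs_pos p) _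
  have h1 : ∀ (n : ℕ) (p : {w : ℂ // w ∈ unitDisk ∧ w ≠ 0}),
      ‖p.1‖ ^ (ordAt (g n) p.1).toNat ≤ 1 :=
    fun n p => pow_le_one₀ (habs_pos p).le (habs_lt p).le
  have hb0 : ∀ p : {w : ℂ // w ∈ unitDisk ∧ w ≠ 0},
      0 < ‖p.1‖ ^ (ordAt G p.1).toNat :=
    fun p => pow_pos (habs_pos p) _
  have hb1 : ∀ p : {w : ℂ // w ∈ unitDisk ∧ w ≠ 0},
      ‖p.1‖ ^ (ordAt G p.1).toNat ≤ 1 :=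
    fun p => pow_le_one₀ (habs_pos p).le (habs_lt p).le
  have hle : ∀ (n : ℕ) (p : {w : ℂ // w ∈ unitDisk ∧ w ≠ 0}),
      ‖p.1‖ ^ (ordAt G p.1).toNat ≤ ‖p.1‖ ^ (ordAt (g n) p.1).toNat := by
    intro n p
    have hmn : (ordAt (g n) p.1).toNat ≤ (ordAt G p.1).toNat :=
      ENat.toNat_le_toNat (hub n p.1 p.2.1) (hGtop p.1 p.2.1)
    exact pow_le_pow_of_le_one (habs_pos p).le (habs_lt p).le hmn
  have heq : ∀ p : {w : ℂ // w ∈ unitDisk ∧ w ≠ 0}, ∀ᶠ n in atTop,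
      ‖p.1‖ ^ (ordAt (g n) p.1).toNat = ‖p.1‖ ^ (ordAt G p.1).toNat := by
    intro p
    filter_upwards [hEv p.1 p.2.1] with n hn
    rw [hn]
  refine ⟨?_, ?_, ?_⟩
  · exact fun n => ⟨_, hasProd_iInf (h0 n) (h1 n)⟩
  · exact ⟨_, hasProd_iInf hb0 hb1⟩
  · exact tendsto_tprod_of_eventually h0 h1 hb0 hb1 hle heq


end
end
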